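/- Write f ∈ V ⊗ ℂ(z_1,…,z_n,h) in coordinates as f = Σ_I f_I v_I with f_I ∈ ℂ(z_1,…,z_n,h), the sum over all decompositions I. Then f is invariant with respect to the S_n^+-action (resp. the S_n^−-action) if and only if f_{σ(I)} = ŝ_σ^+ f_I (resp. f_{σ(I)} = ŝ_σ^− f_I) for every decomposition I and every σ ∈ S_n. -/

import Mathlib

open scoped BigOperators

noncomputable section

namespace GRTV

/-- The field `ℂ(z_1,…,z_n,h)` of rational functions. -/
abbrev K (n : ℕ) : Type := FractionRing (MvPolynomial (Fin n ⊕ Unit) ℂ)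

/-- The variable `z_i`. -/
def z {n : ℕ} (i : Fin n) : K n :=
  algebraMap (MvPolynomial (Fin n ⊕ Unit) ℂ) (K n) (MvPolynomial.X (Sum.inl i))

/-- The variable `h`. -/
def hvar {n : ℕ} : K n :=
  algebraMap (MvPolynomial (Fin n ⊕ Unit) ℂ) (K n) (MvPolynomial.X (Sum.inr ()))

/-- The field automorphism of `ℂ(z_1,…,z_n,h)` permuting the variables `z_i` by `σ`
(and fixing `h`); `f ↦ f^σ`. -/
def permK {n : ℕ} (σ : Equiv.Perm (Fin n)) : K n ≃+* K n :=
  IsFractionRing.ringEquivOfRingEquiv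
    (MvPolynomial.renameEquiv ℂ (Equiv.sumCongr σ (Equiv.refl Unit))).toRingEquiv

/-- `V ⊗ ℂ(z_1,…,z_n,h)` in coordinates: a vector is the family of its coordinates
in the basis `{v_I}`, where a basis index (a decomposition `I`) is recorded as the word
`m : Fin n → Fin N` with `I_j = m⁻¹(j)`. -/
abbrev VV (n N : ℕ) : Type := (Fin n → Fin N) → K n

/-- `h` for the `+` case (`ε = true`) and `-h` for the `−` case (`ε = false`). -/
def sign' {n : ℕ} (ε : Bool) : K n := if ε then hvar else -hvar

def fin1 {n : ℕ} (i : ℕ) (hi : i + 1 < n) : Fin n := ⟨i, Nat.lt_of_succ_lt hi⟩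
def fin2 {n : ℕ} (i : ℕ) (hi : i + 1 < n) : Fin n := ⟨i + 1, hi⟩

/-- The operator `s_i^±` (`ε = true` for `+`, `ε = false` for `−`):
`s_i^± f = ((z_i−z_{i+1})P^{(i,i+1)} ∓ h)/(z_i−z_{i+1}) · f^{s_i} ± h/(z_i−z_{i+1}) · f`.
Here `P^{(i,i+1)}` acts on coordinates by precomposing the word with the transposition,
and `f^{s_i}` applies `permK` coordinatewise. -/
def sOp {n N : ℕ} (ε : Bool) (i : ℕ) (hi : i + 1 < n) (f : VV n N) : VV n N :=
  fun m =>
    ((z (fin1 i hi) - z (fin2 i hi)) *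
          permK (Equiv.swap (fin1 i hi) (fin2 i hi))
            (f (m ∘ ⇑(Equiv.swap (fin1 i hi) (fin2 i hi))))
        - sign' ε * permK (Equiv.swap (fin1 i hi) (fin2 i hi)) (f m))
      / (z (fin1 i hi) - z (fin2 i hi))
    + sign' ε / (z (fin1 i hi) - z (fin2 i hi)) * f m

/-- The scalar operator `ŝ_i^±` on `ℂ(z_1,…,z_n,h)`:
`ŝ_i^± f = (z_i−z_{i+1} ± h)/(z_i−z_{i+1}) · f^{s_i} ∓ h/(z_i−z_{i+1}) · f`. -/
def hOp {n : ℕ} (ε : Bool) (i : ℕ) (hi : i + 1 < n) (f : K n) : K n :=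
  ((z (fin1 i hi) - z (fin2 i hi) + sign' ε) *
      permK (Equiv.swap (fin1 i hi) (fin2 i hi)) f
    - sign' ε * f) / (z (fin1 i hi) - z (fin2 i hi))

lemma permK_algebraMap {n : ℕ} (σ : Equiv.Perm (Fin n)) (p : MvPolynomial (Fin n ⊕ Unit) ℂ) :
    permK σ (algebraMap _ (K n) p) =
      algebraMap _ (K n) (MvPolynomial.rename (Equiv.sumCongr σ (Equiv.refl Unit)) p) :=
  IsFractionRing.ringEquivOfRingEquiv_algebraMap _ p

lemma permK_z {n : ℕ} (σ : Equiv.Perm (Fin n)) (i : Fin n) : permK σ (z i) = z (σ i) := by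
  rw [z, permK_algebraMap, MvPolynomial.rename_X]; rfl

lemma permK_hvar {n : ℕ} (σ : Equiv.Perm (Fin n)) : permK σ (hvar : K n) = hvar := by
  rw [hvar, permK_algebraMap, MvPolynomial.rename_X]; rfl

lemma permK_sign' {n : ℕ} (σ : Equiv.Perm (Fin n)) (ε : Bool) :
    permK σ (sign' ε : K n) = sign' ε := by
  cases ε <;> simp [sign', permK_hvar, map_neg]

lemma permK_permK {n : ℕ} (σ τ : Equiv.Perm (Fin n)) (x : K n) :
    permK σ (permK τ x) = permK (σ * τ) x := by
  have : ((permK σ).toRingHom.comp (permK τ).toRingHom : K n →+* K n)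
      = (permK (σ * τ)).toRingHom := by
    apply IsLocalization.ringHom_ext (nonZeroDivisors (MvPolynomial (Fin n ⊕ Unit) ℂ))
    apply MvPolynomial.ringHom_ext
    · intro c
      simp only [RingHom.coe_comp, Function.comp_apply, RingEquiv.toRingHom_eq_coe,
        RingHom.coe_coe]
      rw [permK_algebraMap, MvPolynomial.rename_C,
        permK_algebraMap, MvPolynomial.rename_C, permK_algebraMap, MvPolynomial.rename_C]
    · intro p
      simp only [RingHom.coe_comp, Function.comp_apply, RingEquiv.toRingHom_eq_coe,
        RingHom.coe_coe, permK_algebraMap, MvPolynomial.rename_X]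
      cases p with
      | inl i => simp
      | inr u => simp
  exact RingHom.congr_fun this x

lemma permK_one {n : ℕ} (x : K n) : permK (1 : Equiv.Perm (Fin n)) x = x := by
  have : ((permK (1 : Equiv.Perm (Fin n))).toRingHom : K n →+* K n) = RingHom.id (K n) := by
    apply IsLocalization.ringHom_ext (nonZeroDivisors (MvPolynomial (Fin n ⊕ Unit) ℂ))
    apply MvPolynomial.ringHom_ext
    · intro c
      simp only [RingHom.coe_comp, Function.comp_apply, RingEquiv.toRingHom_eq_coe,
        RingHom.coe_coe, RingHom.id_apply]
      rw [permK_algebraMap, MvPolynomial.rename_C]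
    · intro p
      simp only [RingHom.coe_comp, Function.comp_apply, RingEquiv.toRingHom_eq_coe,
        RingHom.coe_coe, RingHom.id_apply, permK_algebraMap, MvPolynomial.rename_X]
      cases p with
      | inl i => simp
      | inr u => simp
  exact RingHom.congr_fun this x

lemma z_ne {n : ℕ} {i j : Fin n} (h : i ≠ j) : (z i : K n) ≠ z j := by
  intro he
  exact h (Sum.inl_injective (MvPolynomial.X_injective
    (IsFractionRing.injective (MvPolynomial (Fin n ⊕ Unit) ℂ) (K n) he)))

lemma fin1_ne_fin2 {n : ℕ} (i : ℕ) (hi : i + 1 < n) : fin1 i hi ≠ fin2 i hi := by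
  intro h
  exact absurd (congrArg Fin.val h) (by simp [fin1, fin2])

/-- The key coordinatewise reformulation of `sOp`-invariance. -/
lemma sOp_eq_iff {n N : ℕ} (ε : Bool) (i : ℕ) (hi : i + 1 < n) (f : VV n N) :
    sOp ε i hi f = f ↔
      ∀ m : Fin n → Fin N,
        f (m ∘ ⇑(Equiv.swap (fin1 i hi) (fin2 i hi))) = hOp ε i hi (f m) := by
  set a := fin1 i hi
  set b := fin2 i hi
  set s := Equiv.swap a b with hs
  have hΔ : (z a - z b : K n) ≠ 0 := sub_ne_zero.mpr (z_ne (fin1_ne_fin2 i hi))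
  have pΔ : permK s (z a - z b) = -(z a - z b) := by
    rw [map_sub, permK_z, permK_z, hs, Equiv.swap_apply_left, Equiv.swap_apply_right]; ring
  have pp : ∀ x : K n, permK s (permK s x) = x := by
    intro x
    rw [permK_permK, hs, Equiv.swap_mul_self, permK_one]
  have pe : permK s (sign' ε : K n) = sign' ε := permK_sign' s ε
  constructor
  · intro H m
    have h1 := congrFun H m
    simp only [sOp] at h1
    simp only [show fin1 i hi = a from rfl, show fin2 i hi = b from rfl, ← hs] at h1
    field_simp at h1
    have h2 := congrArg (permK s) h1
    simp only [map_add, map_sub, map_mul, pp, pe, pΔ] at h2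
    rw [hOp, eq_div_iff hΔ]
    linear_combination -h2
  · intro H
    funext m
    have h1 := H m
    rw [hOp, eq_div_iff hΔ] at h1
    simp only [show fin1 i hi = a from rfl, show fin2 i hi = b from rfl, ← hs] at h1
    have h2 := congrArg (permK s) h1
    simp only [map_add, map_sub, map_mul, pp, pe, pΔ] at h2
    simp only [sOp]
    simp only [show fin1 i hi = a from rfl, show fin2 i hi = b from rfl, ← hs]
    field_simp
    linear_combination -h2

/-- writing `f = Σ_I f_I v_I` (here the coordinate `f_I` is `f m` for the word
`m` encoding the decomposition `I`, and `σ(I)` is encoded by the word `m ∘ σ⁻¹`),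
`f` is invariant with respect to the `S_n^±`-action iff `f_{σ(I)} = ŝ_σ^± f_I` for every
decomposition `I` and every `σ ∈ S_n`, where `ŝ^±` is the `S_n`-action on
`ℂ(z_1,…,z_n,h)` generated by the operators `ŝ_i^±` (given by any monoid homomorphism
`ρ` sending each elementary transposition to `ŝ_i^±`). -/
theorem statement4 (n N : ℕ) (ε : Bool) (f : VV n N)
    (ρ : Equiv.Perm (Fin n) →* Function.End (K n))
    (hρ : ∀ (i : ℕ) (hi : i + 1 < n),
      ρ (Equiv.swap (fin1 i hi) (fin2 i hi)) = hOp ε i hi) :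
    (∀ (i : ℕ) (hi : i + 1 < n), sOp ε i hi f = f) ↔
    (∀ (σ : Equiv.Perm (Fin n)) (m : Fin n → Fin N),
      f (m ∘ ⇑σ⁻¹) = ρ σ (f m)) := by
  constructor
  · intro H
    have base : ∀ (i : ℕ) (hi : i + 1 < n) (m : Fin n → Fin N),
        f (m ∘ ⇑(Equiv.swap (fin1 i hi) (fin2 i hi))) =
          ρ (Equiv.swap (fin1 i hi) (fin2 i hi)) (f m) := by
      intro i hi m
      rw [hρ i hi]
      exact (sOp_eq_iff ε i hi f).mp (H i hi) m
    -- the property is multiplicative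
    have one_case : ∀ m : Fin n → Fin N, f (m ∘ ⇑((1 : Equiv.Perm (Fin n))⁻¹)) =
        ρ 1 (f m) := by
      intro m
      simp only [inv_one, map_one]
      have : m ∘ ⇑(1 : Equiv.Perm (Fin n)) = m := rfl
      rw [this]
      rfl
    have mul_case : ∀ x y : Equiv.Perm (Fin n),
        (∀ m, f (m ∘ ⇑x⁻¹) = ρ x (f m)) → (∀ m, f (m ∘ ⇑y⁻¹) = ρ y (f m)) →
        (∀ m, f (m ∘ ⇑(x * y)⁻¹) = ρ (x * y) (f m)) := by
      intro x y hx hy m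
      have hc : m ∘ ⇑(x * y)⁻¹ = (m ∘ ⇑y⁻¹) ∘ ⇑x⁻¹ := by
        funext a
        simp [Function.comp, Equiv.Perm.mul_apply]
      rw [hc, hx (m ∘ ⇑y⁻¹), hy m, map_mul]
      rfl
    intro σ
    cases n with
    | zero =>
      have hσ : σ = 1 := Subsingleton.elim σ 1
      subst hσ
      exact one_case
    | succ k =>
      have hmem : σ ∈ Submonoid.closure
          (Set.range fun i : Fin k ↦ Equiv.swap i.castSucc i.succ) := by
        rw [Equiv.Perm.mclosure_swap_castSucc_succ k]
        exact Submonoid.mem_top σ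
      refine Submonoid.closure_induction ?_ ?_ ?_ hmem
      · rintro x ⟨j, rfl⟩
        have hj : (j : ℕ) + 1 < k + 1 := Nat.succ_lt_succ j.isLt
        have e1 : j.castSucc = fin1 (j : ℕ) hj := by ext; simp [fin1]
        have e2 : j.succ = fin2 (j : ℕ) hj := by ext; simp [fin2]
        intro m
        simp only [Equiv.swap_inv]
        rw [e1, e2]
        exact base (j : ℕ) hj m
      · exact one_case
      · intro x y _ _ hx hy
        exact mul_case x y hx hy
  · intro H i hi
    rw [sOp_eq_iff ε i hi f]
    intro m
    have h1 := H (Equiv.swap (fin1 i hi) (fin2 i hi)) m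
    rw [Equiv.swap_inv] at h1
    rw [h1, hρ i hi]

end GRTV
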